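/- Let n ≥ 1, α > 0, β > 0, q̄ > 0, u ≥ 0, and let S ∈ ℝⁿˣⁿ satisfy S + Sᵀ ≺ 0 (negative definite). Then the symmetric 2n×2n block matrix Υ = [[−2αI + u(S + Sᵀ), 2αI], [2αI, −2αI + q̄(α/β)(S + Sᵀ)]] is negative definite. -/

import Mathlib

open Matrix

theorem stmt_13 {n : ℕ} (hn : 1 ≤ n) (α β qb u : ℝ)
    (hα : 0 < α) (hβ : 0 < β) (hq : 0 < qb) (hu : 0 ≤ u)
    (S : Matrix (Fin n) (Fin n) ℝ) (hS : (-(S + Sᵀ)).PosDef) :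
    (-(Matrix.fromBlocks
        (-((2 * α) • (1 : Matrix (Fin n) (Fin n) ℝ)) + u • (S + Sᵀ))
        ((2 * α) • (1 : Matrix (Fin n) (Fin n) ℝ))
        ((2 * α) • (1 : Matrix (Fin n) (Fin n) ℝ))
        (-((2 * α) • (1 : Matrix (Fin n) (Fin n) ℝ)) + (qb * α / β) • (S + Sᵀ)))).PosDef := by
  set M : Matrix (Fin n) (Fin n) ℝ := S + Sᵀ with hM
  have hMsym : Mᵀ = M := by simp [hM, transpose_add, add_comm]
  set c : ℝ := qb * α / β with hc
  have hcpos : 0 < c := by positivity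
  set I : Matrix (Fin n) (Fin n) ℝ := 1 with hI
  have hneg : (-(Matrix.fromBlocks (-((2 * α) • I) + u • M) ((2 * α) • I) ((2 * α) • I)
        (-((2 * α) • I) + c • M))) =
      Matrix.fromBlocks ((2 * α) • I + u • (-M)) (-((2 * α) • I)) (-((2 * α) • I))
        ((2 * α) • I + c • (-M)) := by
    ext (i|i) (j|j) <;> simp [Matrix.fromBlocks] <;> ring
  rw [hneg]
  rw [posDef_iff_dotProduct_mulVec]
  constructor
  · apply Matrix.IsHermitian.fromBlocks
    · show _ = _
      rw [conjTranspose_eq_transpose_of_trivial]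
      simp [transpose_add, transpose_smul, hMsym, hI]
    · rw [conjTranspose_eq_transpose_of_trivial]
      simp [hI]
    · show _ = _
      rw [conjTranspose_eq_transpose_of_trivial]
      simp [transpose_add, transpose_smul, hMsym, hI]
  · intro x hx
    set x₁ : Fin n → ℝ := x ∘ Sum.inl with hx₁
    set x₂ : Fin n → ℝ := x ∘ Sum.inr with hx₂
    have hxe : x = Sum.elim x₁ x₂ := by
      funext i; cases i <;> rfl
    have key : star x ⬝ᵥ ((Matrix.fromBlocks ((2 * α) • I + u • (-M)) (-((2 * α) • I))
          (-((2 * α) • I)) ((2 * α) • I + c • (-M))) *ᵥ x) =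
        2 * α * ((x₁ - x₂) ⬝ᵥ (x₁ - x₂)) + u * (x₁ ⬝ᵥ ((-M) *ᵥ x₁)) +
          c * (x₂ ⬝ᵥ ((-M) *ᵥ x₂)) := by
      rw [hxe]
      simp only [star_trivial, fromBlocks_mulVec, sumElim_dotProduct_sumElim,
        add_mulVec, smul_mulVec, neg_mulVec, one_mulVec, hI,
        dotProduct_add, dotProduct_smul, dotProduct_neg, smul_eq_mul,
        dotProduct_sub, sub_dotProduct]
      simp only [Sum.elim_comp_inl, Sum.elim_comp_inr]
      rw [dotProduct_comm x₂ x₁]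
      ring
    rw [key]
    rcases eq_or_ne x₂ 0 with h2 | h2
    · have h1 : x₁ ≠ 0 := by
        intro h1; apply hx; rw [hxe, h1, h2]; ext (i|i) <;> simp
      have hd : 0 < (x₁ - x₂) ⬝ᵥ (x₁ - x₂) := by
        rw [h2, sub_zero]
        simpa using dotProduct_self_star_pos_iff.mpr h1
      have := hS.posSemidef.dotProduct_mulVec_nonneg x₁
      have h2' := hS.posSemidef.dotProduct_mulVec_nonneg x₂
      simp only [star_trivial] at this h2'
      nlinarith
    · have hd : 0 ≤ (x₁ - x₂) ⬝ᵥ (x₁ - x₂) := by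
        simpa using dotProduct_self_star_nonneg (x₁ - x₂)
      have h2' := hS.dotProduct_mulVec_pos h2
      simp only [star_trivial] at h2'
      have := hS.posSemidef.dotProduct_mulVec_nonneg x₁
      simp only [star_trivial] at this
      nlinarith
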